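/- arXiv:2211.16854 — 2 statements merged into one kernel-verified Lean document; each statement's English description precedes it below -/
import Mathlib

section
/- Every primitive pseudo-cograph is a comparability graph, i.e., its edge set admits a transitive orientation. -/
/-- A graph is P₄-free (i.e., a cograph) if it has no induced subgraph
isomorphic to the path on four vertices. -/
def IsP4Free {V : Type} (G : SimpleGraph V) : Prop :=
  ¬ Nonempty (SimpleGraph.pathGraph 4 ↪g G)

/-- `G` is a `(v, G[V1], G[V2])`-pseudo-cograph. -/
def IsPseudoCographAt {V : Type} (G : SimpleGraph V) (v : V) (V1 V2 : Set V) : Prop :=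
  V1 ∪ V2 = Set.univ ∧ V1 ∩ V2 = {v} ∧ 1 < V1.ncard ∧ 1 < V2.ncard ∧
  IsP4Free (G.induce V1) ∧ IsP4Free (G.induce V2) ∧
  ((∀ x ∈ V1 \ {v}, ∀ y ∈ V2 \ {v}, G.Adj x y) ∨
   (∀ x ∈ V1 \ {v}, ∀ y ∈ V2 \ {v}, ¬ G.Adj x y))

/-- `G` is a pseudo-cograph. -/
def IsPseudoCograph {V : Type} (G : SimpleGraph V) : Prop :=
  Nat.card V ≤ 2 ∨ ∃ (v : V) (V1 V2 : Set V), IsPseudoCographAt G v V1 V2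

/-- `M` is a module of `G`. -/
def IsModule {V : Type} (G : SimpleGraph V) (M : Set V) : Prop :=
  ∀ z ∉ M, (∀ x ∈ M, G.Adj z x) ∨ (∀ x ∈ M, ¬ G.Adj z x)

/-- A graph is primitive if it has at least four vertices and all of its
modules are trivial. -/
def IsPrimitive {V : Type} (G : SimpleGraph V) : Prop :=
  4 ≤ Nat.card V ∧
    ∀ M : Set V, IsModule G M → M = ∅ ∨ (∃ x, M = {x}) ∨ M = Set.univ


section Helpers
open SimpleGraph

variable {V : Type}

/-- Reachability by a walk avoiding the vertex `v`. -/
def AvoidReach (G : SimpleGraph V) (v x y : V) : Prop :=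
  ∃ p : G.Walk x y, v ∉ p.support

namespace AvoidReach

variable {G : SimpleGraph V} {v x y z : V}

lemma ne_left (h : AvoidReach G v x y) : x ≠ v := by
  obtain ⟨p, hp⟩ := h
  exact fun he => hp (he ▸ p.start_mem_support)

lemma ne_right (h : AvoidReach G v x y) : y ≠ v := by
  obtain ⟨p, hp⟩ := h
  exact fun he => hp (he ▸ p.end_mem_support)

lemma refl (hx : x ≠ v) : AvoidReach G v x x :=
  ⟨SimpleGraph.Walk.nil, by simp [Ne.symm hx]⟩

lemma symm (h : AvoidReach G v x y) : AvoidReach G v y x := by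
  obtain ⟨p, hp⟩ := h
  exact ⟨p.reverse, by simpa [SimpleGraph.Walk.support_reverse] using hp⟩

lemma trans (h : AvoidReach G v x y) (h' : AvoidReach G v y z) : AvoidReach G v x z := by
  obtain ⟨p, hp⟩ := h
  obtain ⟨q, hq⟩ := h'
  refine ⟨p.append q, ?_⟩
  rw [SimpleGraph.Walk.support_append]
  intro hm
  rcases List.mem_append.1 hm with hm | hm
  · exact hp hm
  · exact hq (List.mem_of_mem_tail hm)

lemma of_adj (h : G.Adj x y) (hx : x ≠ v) (hy : y ≠ v) : AvoidReach G v x y :=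
  ⟨h.toWalk, by simp [Ne.symm hx, Ne.symm hy]⟩

end AvoidReach

/-- From a walk from `x` to `u` with `x ≠ u`, we find a neighbor `c` of `u`
in the avoid-`u` reachability class of `x`. -/
lemma exists_nbr_avoidReach {G : SimpleGraph V} :
    ∀ {x u : V} (_ : G.Walk x u), x ≠ u → ∃ c, G.Adj u c ∧ AvoidReach G u c x := by
  intro x u p
  induction p with
  | nil => intro h; exact absurd rfl h
  | @cons a b c h q ih =>
    intro ha
    by_cases hb : b = c
    · subst hb
      exact ⟨a, h.symm, AvoidReach.refl ha⟩
    · obtain ⟨c', h1, h2⟩ := ih hb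
      exact ⟨c', h1, h2.trans (AvoidReach.of_adj h.symm hb ha)⟩

lemma nbr_in_class {G : SimpleGraph V} {v : V} (hG : G.Connected) (x : V) (hx : x ≠ v) :
    ∃ c, G.Adj v c ∧ AvoidReach G v c x := by
  obtain ⟨p⟩ := hG.preconnected x v
  exact exists_nbr_avoidReach p hx

/-- Along a walk avoiding `v` from a non-neighbor of `v` to a neighbor of `v`,
there is an edge from a non-neighbor to a neighbor. -/
lemma cross_pair {G : SimpleGraph V} {v : V} :
    ∀ {w c : V} (p : G.Walk w c), v ∉ p.support → ¬ G.Adj v w → G.Adj v c →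
      ∃ a b, G.Adj a b ∧ ¬ G.Adj v a ∧ G.Adj v b ∧
        AvoidReach G v w a ∧ AvoidReach G v w b := by
  intro w c p
  induction p with
  | nil => intro _ hw hc; exact absurd hc hw
  | @cons a b c h q ih =>
    intro hsup hw hc
    rw [SimpleGraph.Walk.support_cons] at hsup
    have hva : v ≠ a := fun he => hsup (by simp [he])
    have hvq : v ∉ q.support := fun hm => hsup (List.mem_cons_of_mem _ hm)
    have hvb : v ≠ b := fun he => hvq (he ▸ q.start_mem_support)
    by_cases hb : G.Adj v b
    · exact ⟨a, b, h, hw, hb, AvoidReach.refl (Ne.symm hva),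
        AvoidReach.of_adj h (Ne.symm hva) (Ne.symm hvb)⟩
    · obtain ⟨a', b', h1, h2, h3, h4, h5⟩ := ih hvq hb hc
      have hab : AvoidReach G v a b := AvoidReach.of_adj h (Ne.symm hva) (Ne.symm hvb)
      exact ⟨a', b', h1, h2, h3, hab.trans h4, hab.trans h5⟩

/-- The core P₄-construction: `G` connected, `w` a non-neighbor of `v`,
and `d` a vertex not avoid-`v`-reachable from `w`. -/
lemma core_P4 {G : SimpleGraph V} {v w d : V} (hG : G.Connected)
    (hw : ¬ G.Adj v w) (hwv : w ≠ v) (hd : d ≠ v) (hwd : ¬ AvoidReach G v w d) :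
    Nonempty (SimpleGraph.pathGraph 4 ↪g G) := by
  obtain ⟨c1, hc1adj, hc1w⟩ := nbr_in_class hG w hwv
  obtain ⟨c2, hc2adj, hc2d⟩ := nbr_in_class hG d hd
  obtain ⟨p, hp⟩ := hc1w.symm
  obtain ⟨a, b, hab, hva, hvb, hwa, hwb⟩ := cross_pair p hp hw hc1adj
  -- the P4 is c2 - v - b - a
  have hc2v : c2 ≠ v := hc2adj.ne'
  have hbv : b ≠ v := hwb.ne_right
  have hav : a ≠ v := hwa.ne_right
  have hnc2b : ¬ G.Adj c2 b := fun h =>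
    hwd (hwb.trans ((AvoidReach.of_adj h hc2v hbv).symm.trans hc2d))
  have hnc2a : ¬ G.Adj c2 a := fun h =>
    hwd (hwa.trans ((AvoidReach.of_adj h hc2v hav).symm.trans hc2d))
  have hc2b : c2 ≠ b := by rintro rfl; exact hwd (hwb.trans hc2d)
  have hc2a : c2 ≠ a := by rintro rfl; exact hwd (hwa.trans hc2d)
  have hvb' : v ≠ b := hvb.ne
  have hvane : v ≠ a := Ne.symm hav
  have hba : b ≠ a := hab.ne'
  have hbc2 : ¬ G.Adj b c2 := fun h => hnc2b h.symm
  have hac2 : ¬ G.Adj a c2 := fun h => hnc2a h.symm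
  have hav' : ¬ G.Adj a v := fun h => hva h.symm
  refine ⟨⟨⟨![c2, v, b, a], ?_⟩, ?_⟩⟩
  · intro i j hij
    fin_cases i <;> fin_cases j <;> simp_all
  · intro i j
    show G.Adj (![c2, v, b, a] i) (![c2, v, b, a] j) ↔ (SimpleGraph.pathGraph 4).Adj i j
    rw [SimpleGraph.pathGraph_adj]
    fin_cases i <;> fin_cases j <;>
      first
        | exact iff_of_true hc2adj.symm (by decide)
        | exact iff_of_true hc2adj (by decide)
        | exact iff_of_true hvb (by decide)
        | exact iff_of_true hvb.symm (by decide)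
        | exact iff_of_true hab.symm (by decide)
        | exact iff_of_true hab (by decide)
        | exact iff_of_false (G.loopless.irrefl _) (by decide)
        | exact iff_of_false hnc2b (by decide)
        | exact iff_of_false hbc2 (by decide)
        | exact iff_of_false hnc2a (by decide)
        | exact iff_of_false hac2 (by decide)
        | exact iff_of_false hva (by decide)
        | exact iff_of_false hav' (by decide)

end Helpers

section PartB
open SimpleGraph

variable {V : Type}

lemma first_edge {G : SimpleGraph V} {x y : V} (h : G.Reachable x y) (hxy : x ≠ y) :
    ∃ b, G.Adj x b := by
  obtain ⟨p⟩ := h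
  cases p with
  | nil => exact absurd rfl hxy
  | cons h _ => exact ⟨_, h⟩

lemma exists_nonadj {G : SimpleGraph V} (hGc : Gᶜ.Connected) [Nontrivial V] (v : V) :
    ∃ w, w ≠ v ∧ ¬ G.Adj v w := by
  obtain ⟨u, hu⟩ := exists_ne v
  obtain ⟨b, hb⟩ := first_edge (hGc.preconnected v u) (Ne.symm hu)
  rw [SimpleGraph.compl_adj] at hb
  exact ⟨b, Ne.symm hb.1, hb.2⟩

lemma walk_induce {G : SimpleGraph V} {S : Set V} :
    ∀ {x y : V} (p : G.Walk x y), (∀ z ∈ p.support, z ∈ S) → ∀ (hx : x ∈ S) (hy : y ∈ S),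
      (G.induce S).Reachable ⟨x, hx⟩ ⟨y, hy⟩ := by
  intro x y p
  induction p with
  | nil => intro _ hx hy; exact SimpleGraph.Reachable.refl _
  | @cons a b c h q ih =>
    intro hp hx hy
    have hb : b ∈ S := hp b (by simp)
    have hq : ∀ z ∈ q.support, z ∈ S := fun z hz =>
      hp z (by rw [SimpleGraph.Walk.support_cons]; exact List.mem_cons_of_mem _ hz)
    have hadj : (G.induce S).Adj ⟨a, hx⟩ ⟨b, hb⟩ := h
    exact hadj.reachable.trans (ih hq hb hy)

lemma avoid_connected {G : SimpleGraph V} {v w : V} (hwv : w ≠ v)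
    (h : ∀ x, x ≠ v → AvoidReach G v w x) :
    (G.induce ({v}ᶜ : Set V)).Connected := by
  rw [SimpleGraph.connected_iff]
  constructor
  · rintro ⟨x, hx⟩ ⟨y, hy⟩
    have hx' : x ≠ v := hx
    have hy' : y ≠ v := hy
    obtain ⟨p, hp⟩ := (h x hx').symm.trans (h y hy')
    have hsupp : ∀ z ∈ p.support, z ∈ ({v}ᶜ : Set V) := by
      intro z hz
      simp only [Set.mem_compl_iff, Set.mem_singleton_iff]
      rintro rfl; exact hp hz
    exact walk_induce p hsupp hx hy
  · exact ⟨⟨w, hwv⟩⟩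

/-- Complement of an induced subgraph is the induced subgraph of the complement. -/
lemma compl_induce {G : SimpleGraph V} (S : Set V) :
    (G.induce S)ᶜ = (Gᶜ).induce S := by
  ext a b
  show a ≠ b ∧ ¬ G.Adj ↑a ↑b ↔ (↑a : V) ≠ ↑b ∧ ¬ G.Adj ↑a ↑b
  rw [← Subtype.coe_ne_coe]

/-- An embedding between graphs gives an embedding between complements. -/
def embCompl {W X : Type} {A : SimpleGraph W} {B : SimpleGraph X} (f : A ↪g B) :
    Aᶜ ↪g Bᶜ where
  toEmbedding := f.toEmbedding
  map_rel_iff' := by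
    intro a b
    simp only [Function.Embedding.coeFn_mk, SimpleGraph.compl_adj]
    exact and_congr f.injective.ne_iff (not_congr f.map_adj_iff)

/-- `P₄` is isomorphic to its complement. -/
def p4compl : SimpleGraph.pathGraph 4 ≃g (SimpleGraph.pathGraph 4)ᶜ where
  toEquiv := ⟨![1, 3, 0, 2], ![2, 0, 3, 1], by decide, by decide⟩
  map_rel_iff' := by
    intro a b
    show (SimpleGraph.pathGraph 4)ᶜ.Adj (![1, 3, 0, 2] a) (![1, 3, 0, 2] b) ↔ _
    rw [SimpleGraph.compl_adj, SimpleGraph.pathGraph_adj, SimpleGraph.pathGraph_adj]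
    fin_cases a <;> fin_cases b <;> decide

lemma p4_free_compl {G : SimpleGraph V} (h : IsP4Free G) : IsP4Free Gᶜ := by
  rintro ⟨e⟩
  have f : (SimpleGraph.pathGraph 4)ᶜ ↪g Gᶜᶜ := embCompl e
  rw [compl_compl] at f
  exact h ⟨f.comp p4compl.toEmbedding⟩

lemma p4_free_induce {G : SimpleGraph V} (h : IsP4Free G) (S : Set V) :
    IsP4Free (G.induce S) := by
  rintro ⟨e⟩
  exact h ⟨(SimpleGraph.Embedding.induce S).comp e⟩

/-- If `G` and `Gᶜ` are both connected with at least 2 vertices,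
then `G` contains an induced `P₄`. -/
lemma seinsche : ∀ (n : ℕ) {V : Type} [Fintype V] (G : SimpleGraph V),
    Nat.card V ≤ n → 2 ≤ Nat.card V → G.Connected → Gᶜ.Connected →
    Nonempty (SimpleGraph.pathGraph 4 ↪g G) := by
  intro n
  induction n with
  | zero => intro V _ G h1 h2 _ _; omega
  | succ n ih =>
    intro V _ G hle hcard hG hGc
    have hnt : Nontrivial V := by
      have := Nat.card_eq_fintype_card (α := V)
      rw [this] at hcard
      exact Fintype.one_lt_card_iff_nontrivial.1 hcard
    by_cases h2 : Nat.card V ≤ 2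
    · -- exactly two vertices: contradiction
      exfalso
      have hc2 : Nat.card V = 2 := le_antisymm h2 hcard
      obtain ⟨x, y, hxy, hxyuniv⟩ := Nat.card_eq_two_iff.1 hc2
      have hall : ∀ z : V, z = x ∨ z = y := fun z => by
        have : z ∈ ({x, y} : Set V) := hxyuniv ▸ Set.mem_univ z
        simpa using this
      have hadj : G.Adj x y := by
        obtain ⟨b, hb⟩ := first_edge (hG.preconnected x y) hxy
        rcases hall b with rfl | rfl
        · exact absurd hb (G.loopless.irrefl _)
        · exact hb
      have hadj' : Gᶜ.Adj x y := by
        obtain ⟨b, hb⟩ := first_edge (hGc.preconnected x y) hxy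
        rcases hall b with rfl | rfl
        · exact absurd hb (Gᶜ.loopless.irrefl _)
        · exact hb
      exact hadj'.2 hadj
    · push_neg at h2
      have hcard3 : 3 ≤ Nat.card V := h2
      obtain ⟨v⟩ : Nonempty V := inferInstance
      set S : Set V := {v}ᶜ with hS
      haveI : Fintype ↥S := Fintype.ofFinite _
      have hcardS : Nat.card ↥S + 1 = Nat.card V := by
        rw [Nat.card_coe_set_eq]
        have := Set.ncard_add_ncard_compl ({v} : Set V)
        rw [Set.ncard_singleton, ← hS] at this
        omega
      by_cases hboth : (G.induce S).Connected ∧ ((G.induce S))ᶜ.Connected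
      · obtain ⟨e⟩ := ih (G.induce S) (by omega) (by omega) hboth.1 hboth.2
        exact ⟨(SimpleGraph.Embedding.induce S).comp e⟩
      · -- one of them is disconnected
        rw [not_and_or] at hboth
        rcases hboth with hdis | hdis
        · -- G - v disconnected
          obtain ⟨w, hwv, hw⟩ := exists_nonadj hGc v
          have hd : ∃ d, d ≠ v ∧ ¬ AvoidReach G v w d := by
            by_contra hcon
            push_neg at hcon
            exact hdis (avoid_connected hwv fun x hx => hcon x hx)
          obtain ⟨d, hdv, hwd⟩ := hd
          exact core_P4 hG hw hwv hdv hwd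
        · -- Gᶜ - v disconnected
          rw [compl_induce] at hdis
          obtain ⟨w, hwv, hw⟩ := exists_nonadj (G := Gᶜ) (by rwa [compl_compl]) v
          have hd : ∃ d, d ≠ v ∧ ¬ AvoidReach Gᶜ v w d := by
            by_contra hcon
            push_neg at hcon
            exact hdis (avoid_connected hwv fun x hx => hcon x hx)
          obtain ⟨d, hdv, hwd⟩ := hd
          obtain ⟨e⟩ := core_P4 hGc hw hwv hdv hwd
          have f : (SimpleGraph.pathGraph 4)ᶜ ↪g Gᶜᶜ := embCompl e
          rw [compl_compl] at f
          exact ⟨f.comp p4compl.toEmbedding⟩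

end PartB

section PartC
open SimpleGraph

variable {V : Type}

/-- A transitive orientation of `G`. -/
def IsTOrient (G : SimpleGraph V) (r : V → V → Prop) : Prop :=
  (∀ x y, G.Adj x y → (r x y ↔ ¬ r y x)) ∧
  (∀ x y, r x y → G.Adj x y) ∧
  (∀ x y z, r x y → r y z → r x z)

/-- Lift a relation on a subtype to the ambient type. -/
def Lift (A : Set V) (r : ↥A → ↥A → Prop) (x y : V) : Prop :=
  ∃ (hx : x ∈ A) (hy : y ∈ A), r ⟨x, hx⟩ ⟨y, hy⟩

lemma Lift.adj {G : SimpleGraph V} {A : Set V} {r : ↥A → ↥A → Prop}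
    (h : IsTOrient (G.induce A) r) {x y : V} (hl : Lift A r x y) : G.Adj x y := by
  obtain ⟨hx, hy, hr⟩ := hl
  exact h.2.1 _ _ hr

lemma Lift.ne {G : SimpleGraph V} {A : Set V} {r : ↥A → ↥A → Prop}
    (h : IsTOrient (G.induce A) r) {x y : V} (hl : Lift A r x y) : x ≠ y :=
  (hl.adj h).ne

lemma Lift.trans {G : SimpleGraph V} {A : Set V} {r : ↥A → ↥A → Prop}
    (h : IsTOrient (G.induce A) r) {x y z : V} (h1 : Lift A r x y) (h2 : Lift A r y z) :
    Lift A r x z := by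
  obtain ⟨hx, hy, hr⟩ := h1
  obtain ⟨hy', hz, hr'⟩ := h2
  exact ⟨hx, hz, h.2.2 _ _ _ hr hr'⟩

lemma Lift.iff_of_mem {A : Set V} {r : ↥A → ↥A → Prop} {x y : V} (hx : x ∈ A) (hy : y ∈ A) :
    Lift A r x y ↔ r ⟨x, hx⟩ ⟨y, hy⟩ :=
  ⟨fun ⟨_, _, h⟩ => h, fun h => ⟨hx, hy, h⟩⟩

/-- Glue two orientations along a vertex `v` when there are no cross edges. -/
lemma glueUnion {G : SimpleGraph V} {A B : Set V} {v : V}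
    (hI : ∀ x, x ∈ A → x ∈ B → x = v) (hvA : v ∈ A)
    (hEdge : ∀ x y, G.Adj x y → (x ∈ A ∧ y ∈ A) ∨ (x ∈ B ∧ y ∈ B))
    {r1 : ↥A → ↥A → Prop} (h1 : IsTOrient (G.induce A) r1) (h1v : ∀ x, ¬ r1 x ⟨v, hvA⟩)
    {r2 : ↥B → ↥B → Prop} (h2 : IsTOrient (G.induce B) r2)
    (h2v : ∀ (hB : v ∈ B) x, ¬ r2 x ⟨v, hB⟩) :
    ∃ r : V → V → Prop, IsTOrient G r ∧ ∀ x, ¬ r x v := by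
  refine ⟨fun x y => Lift A r1 x y ∨ Lift B r2 x y, ⟨?_, ?_, ?_⟩, ?_⟩
  · intro x y hxy
    rcases hEdge x y hxy with ⟨hx, hy⟩ | ⟨hx, hy⟩
    · have e2 : ¬ Lift B r2 x y := by
        rintro ⟨hx2, hy2, h⟩
        exact (Lift.ne h2 ⟨hx2, hy2, h⟩) ((hI x hx hx2).trans (hI y hy hy2).symm)
      have e2' : ¬ Lift B r2 y x := by
        rintro ⟨hy2, hx2, h⟩
        exact (Lift.ne h2 ⟨hy2, hx2, h⟩) ((hI y hy hy2).trans (hI x hx hx2).symm)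
      have eA : Lift A r1 x y ↔ r1 ⟨x, hx⟩ ⟨y, hy⟩ := Lift.iff_of_mem hx hy
      have eA' : Lift A r1 y x ↔ r1 ⟨y, hy⟩ ⟨x, hx⟩ := Lift.iff_of_mem hy hx
      have hiff := h1.1 ⟨x, hx⟩ ⟨y, hy⟩ hxy
      show Lift A r1 x y ∨ Lift B r2 x y ↔ ¬(Lift A r1 y x ∨ Lift B r2 y x)
      tauto
    · have e1 : ¬ Lift A r1 x y := by
        rintro ⟨hx1, hy1, h⟩
        exact (Lift.ne h1 ⟨hx1, hy1, h⟩) ((hI x hx1 hx).trans (hI y hy1 hy).symm)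
      have e1' : ¬ Lift A r1 y x := by
        rintro ⟨hy1, hx1, h⟩
        exact (Lift.ne h1 ⟨hy1, hx1, h⟩) ((hI y hy1 hy).trans (hI x hx1 hx).symm)
      have eB : Lift B r2 x y ↔ r2 ⟨x, hx⟩ ⟨y, hy⟩ := Lift.iff_of_mem hx hy
      have eB' : Lift B r2 y x ↔ r2 ⟨y, hy⟩ ⟨x, hx⟩ := Lift.iff_of_mem hy hx
      have hiff := h2.1 ⟨x, hx⟩ ⟨y, hy⟩ hxy
      show Lift A r1 x y ∨ Lift B r2 x y ↔ ¬(Lift A r1 y x ∨ Lift B r2 y x)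
      tauto
  · rintro x y (h | h)
    · exact h.adj h1
    · exact h.adj h2
  · rintro x y z (hxy | hxy) (hyz | hyz)
    · exact Or.inl (hxy.trans h1 hyz)
    · -- y ∈ A ∩ B, so y = v, contradiction with v source in r1
      exfalso
      obtain ⟨hx1, hy1, hr1⟩ := hxy
      obtain ⟨hy2, hz2, hr2⟩ := hyz
      have : y = v := hI y hy1 hy2
      subst this
      exact h1v _ hr1
    · exfalso
      obtain ⟨hx2, hy2, hr2⟩ := hxy
      obtain ⟨hy1, hz1, hr1⟩ := hyz
      have : y = v := hI y hy1 hy2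
      subst this
      exact h2v hy2 _ hr2
    · exact Or.inr (hxy.trans h2 hyz)
  · rintro x (⟨hx1, hv1, hr⟩ | ⟨hx2, hv2, hr⟩)
    · exact h1v _ hr
    · exact h2v hv2 _ hr

/-- Glue two orientations when the parts are disjoint and all cross edges are present,
oriented from `A` to `B`. -/
lemma glueJoinDisjoint {G : SimpleGraph V} {A B : Set V} {v : V}
    (hdisj : ∀ x, x ∈ A → x ∈ B → False) (hvA : v ∈ A) (hU : ∀ x, x ∈ A ∨ x ∈ B)
    (hCross : ∀ x ∈ A, ∀ y ∈ B, G.Adj x y)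
    {r1 : ↥A → ↥A → Prop} (h1 : IsTOrient (G.induce A) r1) (h1v : ∀ x, ¬ r1 x ⟨v, hvA⟩)
    {r2 : ↥B → ↥B → Prop} (h2 : IsTOrient (G.induce B) r2) :
    ∃ r : V → V → Prop, IsTOrient G r ∧ ∀ x, ¬ r x v := by
  refine ⟨fun x y => Lift A r1 x y ∨ Lift B r2 x y ∨ (x ∈ A ∧ y ∈ B), ⟨?_, ?_, ?_⟩, ?_⟩
  · intro x y hxy
    rcases hU x with hx | hx <;> rcases hU y with hy | hy
    · have nBx : ¬ x ∈ B := fun hz' => hdisj x hx hz'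
      have nBy : ¬ y ∈ B := fun hz' => hdisj y hy hz'
      have eA : Lift A r1 x y ↔ r1 ⟨x, hx⟩ ⟨y, hy⟩ := Lift.iff_of_mem hx hy
      have eA' : Lift A r1 y x ↔ r1 ⟨y, hy⟩ ⟨x, hx⟩ := Lift.iff_of_mem hy hx
      have nB2 : ¬ Lift B r2 x y := fun ⟨h, _, _⟩ => nBx h
      have nB2' : ¬ Lift B r2 y x := fun ⟨h, _, _⟩ => nBy h
      have hiff := h1.1 ⟨x, hx⟩ ⟨y, hy⟩ hxy
      show Lift A r1 x y ∨ Lift B r2 x y ∨ (x ∈ A ∧ y ∈ B) ↔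
        ¬(Lift A r1 y x ∨ Lift B r2 y x ∨ (y ∈ A ∧ x ∈ B))
      tauto
    · have nAy : ¬ y ∈ A := fun h => hdisj y h hy
      have nBx : ¬ x ∈ B := fun h => hdisj x hx h
      have n1 : ¬ Lift A r1 y x := fun ⟨h, _, _⟩ => nAy h
      have n2 : ¬ Lift B r2 y x := fun ⟨_, h, _⟩ => nBx h
      show Lift A r1 x y ∨ Lift B r2 x y ∨ (x ∈ A ∧ y ∈ B) ↔
        ¬(Lift A r1 y x ∨ Lift B r2 y x ∨ (y ∈ A ∧ x ∈ B))
      tauto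
    · have nAx : ¬ x ∈ A := fun h => hdisj x h hx
      have nBy : ¬ y ∈ B := fun h => hdisj y hy h
      have n1 : ¬ Lift A r1 x y := fun ⟨h, _, _⟩ => nAx h
      have n2 : ¬ Lift B r2 x y := fun ⟨_, h, _⟩ => nBy h
      show Lift A r1 x y ∨ Lift B r2 x y ∨ (x ∈ A ∧ y ∈ B) ↔
        ¬(Lift A r1 y x ∨ Lift B r2 y x ∨ (y ∈ A ∧ x ∈ B))
      tauto
    · have nAx : ¬ x ∈ A := fun h => hdisj x h hx
      have nAy : ¬ y ∈ A := fun h => hdisj y h hy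
      have eB : Lift B r2 x y ↔ r2 ⟨x, hx⟩ ⟨y, hy⟩ := Lift.iff_of_mem hx hy
      have eB' : Lift B r2 y x ↔ r2 ⟨y, hy⟩ ⟨x, hx⟩ := Lift.iff_of_mem hy hx
      have n1 : ¬ Lift A r1 x y := fun ⟨h, _, _⟩ => nAx h
      have n1' : ¬ Lift A r1 y x := fun ⟨h, _, _⟩ => nAy h
      have hiff := h2.1 ⟨x, hx⟩ ⟨y, hy⟩ hxy
      show Lift A r1 x y ∨ Lift B r2 x y ∨ (x ∈ A ∧ y ∈ B) ↔
        ¬(Lift A r1 y x ∨ Lift B r2 y x ∨ (y ∈ A ∧ x ∈ B))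
      tauto
  · rintro x y (h | h | ⟨hx, hy⟩)
    · exact h.adj h1
    · exact h.adj h2
    · exact hCross x hx y hy
  · rintro x y z (hxy | hxy | hxy) (hyz | hyz | hyz)
    · exact Or.inl (hxy.trans h1 hyz)
    · exact absurd hyz.1 fun h => hdisj y hxy.2.1 h
    · exact Or.inr (Or.inr ⟨hxy.1, hyz.2⟩)
    · exact absurd hyz.1 fun h => hdisj y h hxy.2.1
    · exact Or.inr (Or.inl (hxy.trans h2 hyz))
    · exact absurd hyz.1 fun h => hdisj y h hxy.2.1
    · exact absurd hyz.1 fun h => hdisj y h hxy.2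
    · exact Or.inr (Or.inr ⟨hxy.1, hyz.2.1⟩)
    · exact absurd hxy.2 fun h => hdisj y hyz.1 h
  · rintro x (⟨hx1, hv1, hr⟩ | ⟨hx2, hv2, hr⟩ | ⟨hx, hv2⟩)
    · exact h1v _ hr
    · exact hdisj v hvA hv2
    · exact hdisj v hvA hv2

end PartC

section PartD
open SimpleGraph

variable {V : Type}

lemma exists_unreachable {G : SimpleGraph V} (h : ¬ G.Connected) (v : V) :
    ∃ a b : V, ¬ G.Reachable a b := by
  by_contra hc
  push_neg at hc
  exact h ((SimpleGraph.connected_iff _).2 ⟨fun a b => hc a b, ⟨v⟩⟩)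

lemma card_subtype_lt {V : Type} [Fintype V] {A : Set V} {t : V} (ht : t ∉ A) :
    Nat.card ↥A < Nat.card V := by
  rw [Nat.card_coe_set_eq, ← Set.ncard_univ V]
  exact Set.ncard_lt_ncard
    (Set.ssubset_univ_iff.2 fun h => ht (h.symm ▸ Set.mem_univ t)) Set.finite_univ

set_option maxHeartbeats 2000000 in
/-- Glue two orientations overlapping at `v`, with all cross edges present away from `v`,
oriented from `A \ {v}` to `B \ {v}`; `v` is a sink of `r1` and a source of `r2`. -/
lemma glueJoinOverlap {G : SimpleGraph V} {A B : Set V} {v : V}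
    (hI : ∀ x, x ∈ A → x ∈ B → x = v) (hvA : v ∈ A) (hvB : v ∈ B)
    (hU : ∀ x, x ∈ A ∨ x ∈ B)
    (hCross : ∀ x, x ∈ A → x ≠ v → ∀ y, y ∈ B → y ≠ v → G.Adj x y)
    {r1 : ↥A → ↥A → Prop} (h1 : IsTOrient (G.induce A) r1) (h1sink : ∀ x, ¬ r1 ⟨v, hvA⟩ x)
    {r2 : ↥B → ↥B → Prop} (h2 : IsTOrient (G.induce B) r2) (h2src : ∀ x, ¬ r2 x ⟨v, hvB⟩) :
    ∃ r : V → V → Prop, IsTOrient G r := by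
  refine ⟨fun x y => Lift A r1 x y ∨ Lift B r2 x y ∨ (x ∈ A ∧ x ≠ v ∧ y ∈ B ∧ y ≠ v),
    ?_, ?_, ?_⟩
  · intro x y hxy
    have hne : x ≠ y := hxy.ne
    by_cases hxA : x ∈ A <;> by_cases hyA : y ∈ A
    · -- both in A
      have n2 : ¬ Lift B r2 x y := fun ⟨hx2, hy2, hr⟩ =>
        hne ((hI x hxA hx2).trans (hI y hyA hy2).symm)
      have n2' : ¬ Lift B r2 y x := fun ⟨hy2, hx2, hr⟩ =>
        hne ((hI x hxA hx2).trans (hI y hyA hy2).symm)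
      have nc : ¬ (x ∈ A ∧ x ≠ v ∧ y ∈ B ∧ y ≠ v) := fun ⟨_, _, hy2, hyv⟩ =>
        hyv (hI y hyA hy2)
      have nc' : ¬ (y ∈ A ∧ y ≠ v ∧ x ∈ B ∧ x ≠ v) := fun ⟨_, _, hx2, hxv⟩ =>
        hxv (hI x hxA hx2)
      have eA : Lift A r1 x y ↔ r1 ⟨x, hxA⟩ ⟨y, hyA⟩ := Lift.iff_of_mem hxA hyA
      have eA' : Lift A r1 y x ↔ r1 ⟨y, hyA⟩ ⟨x, hxA⟩ := Lift.iff_of_mem hyA hxA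
      have hiff := h1.1 ⟨x, hxA⟩ ⟨y, hyA⟩ hxy
      show Lift A r1 x y ∨ Lift B r2 x y ∨ (x ∈ A ∧ x ≠ v ∧ y ∈ B ∧ y ≠ v) ↔
        ¬(Lift A r1 y x ∨ Lift B r2 y x ∨ (y ∈ A ∧ y ≠ v ∧ x ∈ B ∧ x ≠ v))
      tauto
    · -- x ∈ A, y ∉ A; so y ∈ B, y ≠ v
      have hyB : y ∈ B := (hU y).resolve_left hyA
      have hyv : y ≠ v := fun h => hyA (h ▸ hvA)
      by_cases hxv : x = v
      · -- x = v ∈ B: both in B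
        have hxB : x ∈ B := by rw [hxv]; exact hvB
        have n1 : ¬ Lift A r1 x y := fun ⟨_, hy1, _⟩ => hyA hy1
        have n1' : ¬ Lift A r1 y x := fun ⟨hy1, _, _⟩ => hyA hy1
        have nc : ¬ (x ∈ A ∧ x ≠ v ∧ y ∈ B ∧ y ≠ v) := fun ⟨_, hxv', _, _⟩ => hxv' hxv
        have nc' : ¬ (y ∈ A ∧ y ≠ v ∧ x ∈ B ∧ x ≠ v) := fun ⟨hy1, _, _, _⟩ => hyA hy1
        have eB : Lift B r2 x y ↔ r2 ⟨x, hxB⟩ ⟨y, hyB⟩ := Lift.iff_of_mem hxB hyB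
        have eB' : Lift B r2 y x ↔ r2 ⟨y, hyB⟩ ⟨x, hxB⟩ := Lift.iff_of_mem hyB hxB
        have hiff := h2.1 ⟨x, hxB⟩ ⟨y, hyB⟩ hxy
        show Lift A r1 x y ∨ Lift B r2 x y ∨ (x ∈ A ∧ x ≠ v ∧ y ∈ B ∧ y ≠ v) ↔
          ¬(Lift A r1 y x ∨ Lift B r2 y x ∨ (y ∈ A ∧ y ≠ v ∧ x ∈ B ∧ x ≠ v))
        tauto
      · -- genuine cross edge, oriented x → y
        refine iff_of_true (Or.inr (Or.inr ⟨hxA, hxv, hyB, hyv⟩)) ?_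
        rintro (⟨hy1, _, _⟩ | ⟨_, hx2, _⟩ | ⟨hy1, _, _⟩)
        · exact hyA hy1
        · exact hxv (hI x hxA hx2)
        · exact hyA hy1
    · -- x ∉ A, y ∈ A; so x ∈ B, x ≠ v
      have hxB : x ∈ B := (hU x).resolve_left hxA
      have hxv : x ≠ v := fun h => hxA (h ▸ hvA)
      by_cases hyv : y = v
      · -- y = v ∈ B: both in B
        have hyB : y ∈ B := by rw [hyv]; exact hvB
        have n1 : ¬ Lift A r1 x y := fun ⟨hx1, _, _⟩ => hxA hx1
        have n1' : ¬ Lift A r1 y x := fun ⟨_, hx1, _⟩ => hxA hx1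
        have nc : ¬ (x ∈ A ∧ x ≠ v ∧ y ∈ B ∧ y ≠ v) := fun ⟨hx1, _, _, _⟩ => hxA hx1
        have nc' : ¬ (y ∈ A ∧ y ≠ v ∧ x ∈ B ∧ x ≠ v) := fun ⟨_, hyv', _, _⟩ => hyv' hyv
        have eB : Lift B r2 x y ↔ r2 ⟨x, hxB⟩ ⟨y, hyB⟩ := Lift.iff_of_mem hxB hyB
        have eB' : Lift B r2 y x ↔ r2 ⟨y, hyB⟩ ⟨x, hxB⟩ := Lift.iff_of_mem hyB hxB
        have hiff := h2.1 ⟨x, hxB⟩ ⟨y, hyB⟩ hxy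
        show Lift A r1 x y ∨ Lift B r2 x y ∨ (x ∈ A ∧ x ≠ v ∧ y ∈ B ∧ y ≠ v) ↔
          ¬(Lift A r1 y x ∨ Lift B r2 y x ∨ (y ∈ A ∧ y ≠ v ∧ x ∈ B ∧ x ≠ v))
        tauto
      · -- genuine cross edge, oriented y → x
        refine iff_of_false ?_ (not_not_intro (Or.inr (Or.inr ⟨hyA, hyv, hxB, hxv⟩)))
        rintro (⟨hx1, _, _⟩ | ⟨_, hy2, _⟩ | ⟨hx1, _, _⟩)
        · exact hxA hx1
        · exact hyv (hI y hyA hy2)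
        · exact hxA hx1
    · -- both in B
      have hxB : x ∈ B := (hU x).resolve_left hxA
      have hyB : y ∈ B := (hU y).resolve_left hyA
      have n1 : ¬ Lift A r1 x y := fun ⟨hx1, _, _⟩ => hxA hx1
      have n1' : ¬ Lift A r1 y x := fun ⟨hy1, _, _⟩ => hyA hy1
      have nc : ¬ (x ∈ A ∧ x ≠ v ∧ y ∈ B ∧ y ≠ v) := fun ⟨hx1, _, _, _⟩ => hxA hx1
      have nc' : ¬ (y ∈ A ∧ y ≠ v ∧ x ∈ B ∧ x ≠ v) := fun ⟨hy1, _, _, _⟩ => hyA hy1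
      have eB : Lift B r2 x y ↔ r2 ⟨x, hxB⟩ ⟨y, hyB⟩ := Lift.iff_of_mem hxB hyB
      have eB' : Lift B r2 y x ↔ r2 ⟨y, hyB⟩ ⟨x, hxB⟩ := Lift.iff_of_mem hyB hxB
      have hiff := h2.1 ⟨x, hxB⟩ ⟨y, hyB⟩ hxy
      show Lift A r1 x y ∨ Lift B r2 x y ∨ (x ∈ A ∧ x ≠ v ∧ y ∈ B ∧ y ≠ v) ↔
        ¬(Lift A r1 y x ∨ Lift B r2 y x ∨ (y ∈ A ∧ y ≠ v ∧ x ∈ B ∧ x ≠ v))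
      tauto
  · rintro x y (h | h | ⟨hx, hxv, hy, hyv⟩)
    · exact h.adj h1
    · exact h.adj h2
    · exact hCross x hx hxv y hy hyv
  · rintro x y z (hxy | hxy | hxy) (hyz | hyz | hyz)
    · exact Or.inl (hxy.trans h1 hyz)
    · -- lift1 x y, lift2 y z: y = v
      have hyv : y = v := hI y hxy.2.1 hyz.1
      have hxv : x ≠ v := hyv ▸ (Lift.ne h1 hxy)
      have hzv : z ≠ v := fun h => (Lift.ne h2 hyz) (hyv.trans h.symm)
      exact Or.inr (Or.inr ⟨hxy.1, hxv, hyz.2.1, hzv⟩)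
    · -- lift1 x y, cross y z
      have hxv : x ≠ v := by
        rintro rfl
        obtain ⟨hx1, hy1, hr⟩ := hxy
        exact h1sink _ hr
      exact Or.inr (Or.inr ⟨hxy.1, hxv, hyz.2.2⟩)
    · -- lift2 x y, lift1 y z: y = v, contradicting v source in r2
      exfalso
      have hyv : y = v := hI y hyz.1 hxy.2.1
      subst hyv
      obtain ⟨hx2, hy2, hr⟩ := hxy
      exact h2src _ hr
    · exact Or.inr (Or.inl (hxy.trans h2 hyz))
    · exact absurd (hI y hyz.1 hxy.2.1) hyz.2.1
    · exact absurd (hI y hyz.1 hxy.2.2.1) hxy.2.2.2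
    · -- cross x y, lift2 y z
      have hzv : z ≠ v := by
        rintro rfl
        obtain ⟨hy2, hz2, hr⟩ := hyz
        exact h2src _ hr
      exact Or.inr (Or.inr ⟨hxy.1, hxy.2.1, hyz.2.1, hzv⟩)
    · exact absurd (hI y hyz.1 hxy.2.2.1) hyz.2.1

/-- Every finite P₄-free graph has a transitive orientation with any
prescribed vertex as a source. -/
lemma orient_aux : ∀ (n : ℕ) {V : Type} [Fintype V] (G : SimpleGraph V),
    Nat.card V ≤ n → IsP4Free G → ∀ v : V,
    ∃ r : V → V → Prop, IsTOrient G r ∧ ∀ x, ¬ r x v := by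
  intro n
  induction n with
  | zero =>
    intro V _ G hn _ v
    have hne : Nonempty V := ⟨v⟩
    have : 0 < Nat.card V := Nat.card_pos (α := V)
    omega
  | succ n ih =>
    intro V _ G hn h4 v
    by_cases hsmall : Nat.card V ≤ 1
    · have hnoadj : ∀ x y : V, ¬ G.Adj x y := by
        intro x y hxy
        have hnt : Nontrivial V := ⟨x, y, hxy.ne⟩
        have h2 : 1 < Nat.card V := by
          rw [Nat.card_eq_fintype_card]
          exact Fintype.one_lt_card_iff_nontrivial.2 hnt
        omega
      exact ⟨fun _ _ => False,
        ⟨fun x y h => absurd h (hnoadj x y), fun x y h => h.elim, fun _ _ _ h _ => h.elim⟩,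
        fun _ h => h⟩
    · push_neg at hsmall
      have hcard : 2 ≤ Nat.card V := hsmall
      by_cases hconn : G.Connected
      · -- Gᶜ must be disconnected
        have hGc : ¬ Gᶜ.Connected := fun hc =>
          h4 (seinsche (Nat.card V) G le_rfl hcard hconn hc)
        -- A := the Gᶜ-component of v, fully joined to the rest in G
        set A : Set V := {x | Gᶜ.Reachable v x} with hA
        set B : Set V := Aᶜ with hB
        have hvA : v ∈ A := SimpleGraph.Reachable.refl v
        obtain ⟨t, ht⟩ : ∃ t, t ∈ B := by
          obtain ⟨a, b, hab⟩ := exists_unreachable hGc v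
          by_cases ha : a ∈ A
          · by_cases hb : b ∈ A
            · refine absurd (SimpleGraph.Reachable.trans ?_ hb) hab
              exact SimpleGraph.Reachable.symm ha
            · exact ⟨b, hb⟩
          · exact ⟨a, ha⟩
        have hdisj : ∀ x, x ∈ A → x ∈ B → False := fun x h1 h2 => h2 h1
        have hUx : ∀ x, x ∈ A ∨ x ∈ B := fun x => or_not
        have hCross : ∀ x ∈ A, ∀ y ∈ B, G.Adj x y := by
          intro x hx y hy
          have hne : x ≠ y := fun h => hy (h ▸ hx)
          by_contra hnadj
          exact hy (hx.trans (SimpleGraph.Adj.reachable ⟨hne, hnadj⟩))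
        haveI : Fintype ↥A := Fintype.ofFinite _
        haveI : Fintype ↥B := Fintype.ofFinite _
        have hcA : Nat.card ↥A ≤ n := by
          have h1 : Nat.card ↥A < Nat.card V := card_subtype_lt (A := A) (t := t) ht
          omega
        have hcB : Nat.card ↥B ≤ n := by
          have h1 : Nat.card ↥B < Nat.card V :=
            card_subtype_lt (A := B) (t := v) (fun hb => hb hvA)
          omega
        obtain ⟨r1, h1, h1v⟩ := ih (G.induce A) hcA (p4_free_induce h4 A) ⟨v, hvA⟩
        obtain ⟨r2, h2, _⟩ := ih (G.induce B) hcB (p4_free_induce h4 B) ⟨t, ht⟩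
        exact glueJoinDisjoint hdisj hvA hUx hCross h1 h1v h2
      · -- G disconnected
        set A : Set V := {x | G.Reachable v x} with hA
        set B : Set V := Aᶜ with hB
        have hvA : v ∈ A := SimpleGraph.Reachable.refl v
        obtain ⟨t, ht⟩ : ∃ t, t ∈ B := by
          obtain ⟨a, b, hab⟩ := exists_unreachable hconn v
          by_cases ha : a ∈ A
          · by_cases hb : b ∈ A
            · refine absurd (SimpleGraph.Reachable.trans ?_ hb) hab
              exact SimpleGraph.Reachable.symm ha
            · exact ⟨b, hb⟩
          · exact ⟨a, ha⟩
        have hI : ∀ x, x ∈ A → x ∈ B → x = v := fun x h1 h2 => absurd h1 h2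
        have hEdge : ∀ x y, G.Adj x y → (x ∈ A ∧ y ∈ A) ∨ (x ∈ B ∧ y ∈ B) := by
          intro x y hxy
          by_cases hx : x ∈ A
          · exact Or.inl ⟨hx, hx.trans hxy.reachable⟩
          · refine Or.inr ⟨hx, fun hy => hx (hy.trans hxy.symm.reachable)⟩
        haveI : Fintype ↥A := Fintype.ofFinite _
        haveI : Fintype ↥B := Fintype.ofFinite _
        have hcA : Nat.card ↥A ≤ n := by
          have h1 : Nat.card ↥A < Nat.card V := card_subtype_lt (A := A) (t := t) ht
          omega
        have hcB : Nat.card ↥B ≤ n := by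
          have h1 : Nat.card ↥B < Nat.card V :=
            card_subtype_lt (A := B) (t := v) (fun hb => hb hvA)
          omega
        obtain ⟨r1, h1, h1v⟩ := ih (G.induce A) hcA (p4_free_induce h4 A) ⟨v, hvA⟩
        obtain ⟨r2, h2, h2v⟩ := ih (G.induce B) hcB (p4_free_induce h4 B) ⟨t, ht⟩
        refine glueUnion hI hvA hEdge h1 h1v h2 ?_
        intro hvb
        exact absurd hvA hvb

/-- Sink version. -/
lemma orient_aux_sink {V : Type} [Fintype V] (G : SimpleGraph V) (h4 : IsP4Free G) (v : V) :
    ∃ r : V → V → Prop, IsTOrient G r ∧ ∀ x, ¬ r v x := by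
  obtain ⟨r, ⟨ho, ha, ht⟩, hs⟩ := orient_aux (Nat.card V) G le_rfl h4 v
  refine ⟨fun x y => r y x, ⟨?_, ?_, ?_⟩, fun x => hs x⟩
  · intro x y hxy
    have := ho y x hxy.symm
    tauto
  · intro x y h
    exact (ha y x h).symm
  · intro x y z h h'
    exact ht z y x h' h

end PartD

/-- Every primitive pseudo-cograph is a comparability graph: its edge set
admits a transitive orientation. -/
theorem primitive_pseudoCograph_comparability {V : Type} [Fintype V]
    (G : SimpleGraph V) (hprim : IsPrimitive G) (hpc : IsPseudoCograph G) :
    ∃ r : V → V → Prop,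
      (∀ x y, G.Adj x y → (r x y ↔ ¬ r y x)) ∧
      (∀ x y, r x y → G.Adj x y) ∧
      (∀ x y z, r x y → r y z → r x z) := by
  rcases hpc with hsmall | ⟨v, V1, V2, hU, hI, _, _, hF1, hF2, hP3⟩
  · have := hprim.1
    omega
  · have hv12 : v ∈ V1 ∩ V2 := by rw [hI]; exact Set.mem_singleton v
    have hv1 : v ∈ V1 := hv12.1
    have hv2 : v ∈ V2 := hv12.2
    have hUx : ∀ x, x ∈ V1 ∨ x ∈ V2 := fun x => by
      have hx : x ∈ V1 ∪ V2 := by rw [hU]; trivial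
      exact hx
    have hIx : ∀ x, x ∈ V1 → x ∈ V2 → x = v := fun x h1 h2 => by
      have hx : x ∈ V1 ∩ V2 := ⟨h1, h2⟩
      rwa [hI] at hx
    haveI : Fintype ↥V1 := Fintype.ofFinite _
    haveI : Fintype ↥V2 := Fintype.ofFinite _
    rcases hP3 with hjoin | hnone
    · -- join case
      obtain ⟨r1, h1, h1sink⟩ := orient_aux_sink (G.induce V1) hF1 ⟨v, hv1⟩
      obtain ⟨r2, h2, h2src⟩ := orient_aux (Nat.card ↥V2) (G.induce V2) le_rfl hF2 ⟨v, hv2⟩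
      have hCross : ∀ x, x ∈ V1 → x ≠ v → ∀ y, y ∈ V2 → y ≠ v → G.Adj x y := by
        intro x hx hxv y hy hyv
        exact hjoin x ⟨hx, by simpa using hxv⟩ y ⟨hy, by simpa using hyv⟩
      obtain ⟨r, hr⟩ := glueJoinOverlap hIx hv1 hv2 hUx hCross h1 h1sink h2 h2src
      exact ⟨r, hr.1, hr.2.1, hr.2.2⟩
    · -- no cross edges
      obtain ⟨r1, h1, h1v⟩ := orient_aux (Nat.card ↥V1) (G.induce V1) le_rfl hF1 ⟨v, hv1⟩
      obtain ⟨r2, h2, h2v⟩ := orient_aux (Nat.card ↥V2) (G.induce V2) le_rfl hF2 ⟨v, hv2⟩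
      have hEdge : ∀ x y, G.Adj x y → (x ∈ V1 ∧ y ∈ V1) ∨ (x ∈ V2 ∧ y ∈ V2) := by
        intro x y hxy
        rcases hUx x with hx | hx <;> rcases hUx y with hy | hy
        · exact Or.inl ⟨hx, hy⟩
        · by_cases hxv : x = v
          · exact Or.inr ⟨by rw [hxv]; exact hv2, hy⟩
          · by_cases hyv : y = v
            · exact Or.inl ⟨hx, by rw [hyv]; exact hv1⟩
            · exact absurd hxy
                (hnone x ⟨hx, by simpa using hxv⟩ y ⟨hy, by simpa using hyv⟩)
        · by_cases hxv : x = v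
          · exact Or.inl ⟨by rw [hxv]; exact hv1, hy⟩
          · by_cases hyv : y = v
            · exact Or.inr ⟨hx, by rw [hyv]; exact hv2⟩
            · exact absurd hxy.symm
                (hnone y ⟨hy, by simpa using hyv⟩ x ⟨hx, by simpa using hxv⟩)
        · exact Or.inr ⟨hx, hy⟩
      obtain ⟨r, hr, _⟩ := glueUnion hIx hv1 hEdge h1 h1v h2 (fun hB x => h2v x)
      exact ⟨r, hr.1, hr.2.1, hr.2.2⟩
end

section
/- Let G be the disjoint union of two vertex-disjoint paths on four vertices (two copies of P₄). Then G is not a pseudo-cograph. -/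
open SimpleGraph

instance : DecidableRel (SimpleGraph.pathGraph 4).Adj := fun u v =>
  decidable_of_iff _ (SimpleGraph.pathGraph_adj).symm

instance {α β : Type} {G : SimpleGraph α} {H : SimpleGraph β} [DecidableRel G.Adj]
    [DecidableRel H.Adj] : DecidableRel (G ⊕g H).Adj := fun u v =>
  match u, v with
  | Sum.inl a, Sum.inl b => (inferInstance : Decidable (G.Adj a b))
  | Sum.inr a, Sum.inr b => (inferInstance : Decidable (H.Adj a b))
  | Sum.inl _, Sum.inr _ => Decidable.isFalse (by simp)
  | Sum.inr _, Sum.inl _ => Decidable.isFalse (by simp)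

lemma key_deg : ∀ v x y : Fin 4 ⊕ Fin 4, ∃ z : Fin 4 ⊕ Fin 4, z ≠ v ∧ z ≠ x ∧ z ≠ y ∧
    ¬ (SimpleGraph.pathGraph 4 ⊕g SimpleGraph.pathGraph 4).Adj x z ∧
    ¬ (SimpleGraph.pathGraph 4 ⊕g SimpleGraph.pathGraph 4).Adj y z := by decide



theorem aux_two_P4 :
    ¬ (Nat.card (Fin 4 ⊕ Fin 4) ≤ 2 ∨ ∃ (v : Fin 4 ⊕ Fin 4) (V1 V2 : Set (Fin 4 ⊕ Fin 4)),
      V1 ∪ V2 = Set.univ ∧ V1 ∩ V2 = {v} ∧ 1 < V1.ncard ∧ 1 < V2.ncard ∧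
      (¬ Nonempty (SimpleGraph.pathGraph 4 ↪g ((SimpleGraph.pathGraph 4 ⊕g SimpleGraph.pathGraph 4).induce V1))) ∧
      (¬ Nonempty (SimpleGraph.pathGraph 4 ↪g ((SimpleGraph.pathGraph 4 ⊕g SimpleGraph.pathGraph 4).induce V2))) ∧
      ((∀ x ∈ V1 \ {v}, ∀ y ∈ V2 \ {v}, (SimpleGraph.pathGraph 4 ⊕g SimpleGraph.pathGraph 4).Adj x y) ∨
       (∀ x ∈ V1 \ {v}, ∀ y ∈ V2 \ {v}, ¬ (SimpleGraph.pathGraph 4 ⊕g SimpleGraph.pathGraph 4).Adj x y))) := by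
  set G := SimpleGraph.pathGraph 4 ⊕g SimpleGraph.pathGraph 4 with hG
  rintro (h2 | ⟨v, V1, V2, hU, hI, hc1, hc2, hf1, hf2, hP3⟩)
  · simp [Nat.card_eq_fintype_card] at h2
  have hmemU : ∀ z : Fin 4 ⊕ Fin 4, z ∈ V1 ∨ z ∈ V2 := fun z => by
    have : z ∈ V1 ∪ V2 := by rw [hU]; trivial
    exact this
  have huniq : ∀ z, z ∈ V1 → z ∈ V2 → z = v := fun z h1 h2 => by
    have : z ∈ V1 ∩ V2 := ⟨h1, h2⟩
    rwa [hI] at this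
  -- extract a non-v element of V1 and of V2
  have hx : ∃ x, x ∈ V1 ∧ x ≠ v := by
    obtain ⟨a, b, ha, hb, hab⟩ := (Set.one_lt_ncard_iff (Set.toFinite V1)).mp hc1
    by_cases hav : a = v
    · exact ⟨b, hb, by rintro rfl; exact hab hav⟩
    · exact ⟨a, ha, hav⟩
  have hy : ∃ y, y ∈ V2 ∧ y ≠ v := by
    obtain ⟨a, b, ha, hb, hab⟩ := (Set.one_lt_ncard_iff (Set.toFinite V2)).mp hc2
    by_cases hav : a = v
    · exact ⟨b, hb, by rintro rfl; exact hab hav⟩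
    · exact ⟨a, ha, hav⟩
  obtain ⟨x, hxV, hxv⟩ := hx
  obtain ⟨y, hyV, hyv⟩ := hy
  rcases hP3 with hAdj | hNon
  · obtain ⟨z, hzv, hzx, hzy, hnx, hny⟩ := key_deg v x y
    rcases hmemU z with hz | hz
    · exact hny ((hAdj z ⟨hz, hzv⟩ y ⟨hyV, hyv⟩).symm)
    · exact hnx (hAdj x ⟨hxV, hxv⟩ z ⟨hz, hzv⟩)
  · -- no cross edges: one whole P4 component lies in V1 or V2
    have adj_r : ∀ i j : Fin 4, (SimpleGraph.pathGraph 4).Adj i j → G.Adj (Sum.inr i) (Sum.inr j) :=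
      fun i j h => h
    have adj_l : ∀ i j : Fin 4, (SimpleGraph.pathGraph 4).Adj i j → G.Adj (Sum.inl i) (Sum.inl j) :=
      fun i j h => h
    have p01 : (SimpleGraph.pathGraph 4).Adj 0 1 := by decide
    have p12 : (SimpleGraph.pathGraph 4).Adj 1 2 := by decide
    have p23 : (SimpleGraph.pathGraph 4).Adj 2 3 := by decide
    -- generic step lemmas for vertices distinct from v
    have step1 : ∀ a b : Fin 4 ⊕ Fin 4, a ≠ v → b ≠ v → G.Adj a b → a ∈ V1 → b ∈ V1 := by
      intro a b hav hbv hadj ha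
      by_contra hb
      rcases hmemU b with hb' | hb'
      · exact hb hb'
      · exact hNon a ⟨ha, hav⟩ b ⟨hb', hbv⟩ hadj
    have step2 : ∀ a b : Fin 4 ⊕ Fin 4, a ≠ v → b ≠ v → G.Adj a b → a ∈ V2 → b ∈ V2 := by
      intro a b hav hbv hadj ha
      by_contra hb
      rcases hmemU b with hb' | hb'
      · exact hNon b ⟨hb', hbv⟩ a ⟨ha, hav⟩ hadj.symm
      · exact hb hb'
    rcases v with a | a
    · -- v = inl a; the inr-component avoids v
      have hne : ∀ i : Fin 4, (Sum.inr i : Fin 4 ⊕ Fin 4) ≠ Sum.inl a := fun i => by simp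
      have hall : (∀ i : Fin 4, Sum.inr i ∈ V1) ∨ (∀ i : Fin 4, Sum.inr i ∈ V2) := by
        rcases hmemU (Sum.inr 0) with h0 | h0
        · left
          have h1 := step1 _ _ (hne 0) (hne 1) (adj_r 0 1 p01) h0
          have h2 := step1 _ _ (hne 1) (hne 2) (adj_r 1 2 p12) h1
          have h3 := step1 _ _ (hne 2) (hne 3) (adj_r 2 3 p23) h2
          intro i; fin_cases i <;> assumption
        · right
          have h1 := step2 _ _ (hne 0) (hne 1) (adj_r 0 1 p01) h0
          have h2 := step2 _ _ (hne 1) (hne 2) (adj_r 1 2 p12) h1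
          have h3 := step2 _ _ (hne 2) (hne 3) (adj_r 2 3 p23) h2
          intro i; fin_cases i <;> assumption
      rcases hall with hall | hall
      · exact hf1 ⟨⟨⟨fun i => ⟨Sum.inr i, hall i⟩, fun i j hij => by
          simpa using congrArg Subtype.val hij⟩, fun {i j} => by
          simp [SimpleGraph.comap, hG]; exact Iff.rfl⟩⟩
      · exact hf2 ⟨⟨⟨fun i => ⟨Sum.inr i, hall i⟩, fun i j hij => by
          simpa using congrArg Subtype.val hij⟩, fun {i j} => by
          simp [SimpleGraph.comap, hG]; exact Iff.rfl⟩⟩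
    · -- v = inr a; the inl-component avoids v
      have hne : ∀ i : Fin 4, (Sum.inl i : Fin 4 ⊕ Fin 4) ≠ Sum.inr a := fun i => by simp
      have hall : (∀ i : Fin 4, Sum.inl i ∈ V1) ∨ (∀ i : Fin 4, Sum.inl i ∈ V2) := by
        rcases hmemU (Sum.inl 0) with h0 | h0
        · left
          have h1 := step1 _ _ (hne 0) (hne 1) (adj_l 0 1 p01) h0
          have h2 := step1 _ _ (hne 1) (hne 2) (adj_l 1 2 p12) h1
          have h3 := step1 _ _ (hne 2) (hne 3) (adj_l 2 3 p23) h2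
          intro i; fin_cases i <;> assumption
        · right
          have h1 := step2 _ _ (hne 0) (hne 1) (adj_l 0 1 p01) h0
          have h2 := step2 _ _ (hne 1) (hne 2) (adj_l 1 2 p12) h1
          have h3 := step2 _ _ (hne 2) (hne 3) (adj_l 2 3 p23) h2
          intro i; fin_cases i <;> assumption
      rcases hall with hall | hall
      · exact hf1 ⟨⟨⟨fun i => ⟨Sum.inl i, hall i⟩, fun i j hij => by
          simpa using congrArg Subtype.val hij⟩, fun {i j} => by
          simp [SimpleGraph.comap, hG]; exact Iff.rfl⟩⟩
      · exact hf2 ⟨⟨⟨fun i => ⟨Sum.inl i, hall i⟩, fun i j hij => by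
          simpa using congrArg Subtype.val hij⟩, fun {i j} => by
          simp [SimpleGraph.comap, hG]; exact Iff.rfl⟩⟩

/-- The disjoint union of two vertex-disjoint paths on four vertices is not a
pseudo-cograph. -/
theorem not_isPseudoCograph_two_P4 :
    ¬ IsPseudoCograph (SimpleGraph.pathGraph 4 ⊕g SimpleGraph.pathGraph 4) := by
  intro h
  exact aux_two_P4 h
end
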